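/- arXiv:2208.08400 — 2 statements merged into one kernel-verified Lean document; each statement's English description precedes it below -/
import Mathlib

section
/- Let Φ : ℝⁿ → ℝⁿ be a shape-preserving invertible Lipschitz map with ‖DΦ‖_∞ ≤ 1 for which the change of variables formula holds. Then Φ is A₂-stable (there exists C with A₂(Φ_*σ, Φ_*ω) ≤ C A₂(σ,ω) for all locally finite positive Borel measure pairs) if and only if Φ is biLipschitz. -/
open MeasureTheory Set ENNReal NNReal

/-- The axis-parallel cube in `ℝⁿ` with lower corner `c` and side length `r`. -/
def euCube {n : ℕ} (c : EuclideanSpace ℝ (Fin n)) (r : ℝ) : Set (EuclideanSpace ℝ (Fin n)) :=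
  {x | ∀ i, c i ≤ x i ∧ x i ≤ c i + r}

/-- `A₂(σ,ω) = sup_Q (σ(Q)/|Q|)(ω(Q)/|Q|)` over all axis-parallel cubes `Q`. -/
noncomputable def A2char {n : ℕ} (σ ω : Measure (EuclideanSpace ℝ (Fin n))) : ℝ≥0∞ :=
  ⨆ (c : EuclideanSpace ℝ (Fin n)) (r : ℝ) (_ : 0 < r),
    (σ (euCube c r) / volume (euCube c r)) * (ω (euCube c r) / volume (euCube c r))

section AuxStmt13

variable {n : ℕ}

lemma euCube_eq_preimage (c : EuclideanSpace ℝ (Fin n)) (r : ℝ) :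
    euCube c r = (MeasurableEquiv.toLp 2 (Fin n → ℝ)).symm ⁻¹'
      (Set.univ.pi fun i => Icc (c i) (c i + r)) := by
  ext x
  simp [euCube, Set.mem_pi, MeasurableEquiv.coe_toLp_symm, Pi.le_def, forall_and]

lemma measurableSet_euCube (c : EuclideanSpace ℝ (Fin n)) (r : ℝ) :
    MeasurableSet (euCube c r) := by
  rw [euCube_eq_preimage]
  exact (MeasurableEquiv.measurable _) (MeasurableSet.univ_pi fun i => measurableSet_Icc)

lemma volume_euCube (c : EuclideanSpace ℝ (Fin n)) {r : ℝ} (hr : 0 ≤ r) :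
    volume (euCube c r) = ENNReal.ofReal r ^ n := by
  rw [euCube_eq_preimage,
    (EuclideanSpace.volume_preserving_symm_measurableEquiv_toLp (Fin n)).measure_preimage
      ((MeasurableSet.univ_pi fun i => measurableSet_Icc).nullMeasurableSet),
    volume_pi_pi]
  simp [Real.volume_Icc]

lemma abs_coord_le_dist (x y : EuclideanSpace ℝ (Fin n)) (i : Fin n) :
    |x i - y i| ≤ dist x y := by
  rw [EuclideanSpace.dist_eq]
  have h1 : |x i - y i| = Real.sqrt (dist (x i) (y i) ^ 2) := by
    rw [Real.sqrt_sq_eq_abs, Real.dist_eq, abs_abs]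
  rw [h1]
  apply Real.sqrt_le_sqrt
  exact Finset.single_le_sum (f := fun j => dist (x j) (y j) ^ 2)
    (fun j _ => sq_nonneg _) (Finset.mem_univ i)

lemma dist_le_of_mem_euCube {c x y : EuclideanSpace ℝ (Fin n)} {r : ℝ} (hr : 0 ≤ r)
    (hx : x ∈ euCube c r) (hy : y ∈ euCube c r) :
    dist x y ≤ Real.sqrt n * r := by
  rw [EuclideanSpace.dist_eq]
  have h : ∑ i, dist (x i) (y i) ^ 2 ≤ (n : ℝ) * r ^ 2 := by
    calc ∑ i, dist (x i) (y i) ^ 2 ≤ ∑ _i : Fin n, r ^ 2 := by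
          apply Finset.sum_le_sum
          intro i _
          have hxi := hx i; have hyi := hy i
          have : |x i - y i| ≤ r := abs_sub_le_iff.2 ⟨by linarith [hxi.1, hxi.2, hyi.1, hyi.2], by linarith [hxi.1, hxi.2, hyi.1, hyi.2]⟩
          have hd : dist (x i) (y i) ≤ r := by rw [Real.dist_eq]; exact this
          exact pow_le_pow_left₀ dist_nonneg hd 2
      _ = (n : ℝ) * r ^ 2 := by simp [Finset.sum_const, Fintype.card_fin]
  calc Real.sqrt (∑ i, dist (x i) (y i) ^ 2) ≤ Real.sqrt ((n : ℝ) * r ^ 2) := Real.sqrt_le_sqrt h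
    _ = Real.sqrt n * r := by
        rw [Real.sqrt_mul (Nat.cast_nonneg n), Real.sqrt_sq hr]

lemma le_A2char (σ ω : Measure (EuclideanSpace ℝ (Fin n))) (c : EuclideanSpace ℝ (Fin n))
    {r : ℝ} (hr : 0 < r) :
    (σ (euCube c r) / volume (euCube c r)) * (ω (euCube c r) / volume (euCube c r)) ≤
      A2char σ ω :=
  le_iSup_of_le c (le_iSup_of_le r (le_iSup_of_le hr le_rfl))

lemma A2char_le {σ ω : Measure (EuclideanSpace ℝ (Fin n))} {B : ℝ≥0∞}
    (h : ∀ (c : EuclideanSpace ℝ (Fin n)) (r : ℝ), 0 < r →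
      (σ (euCube c r) / volume (euCube c r)) * (ω (euCube c r) / volume (euCube c r)) ≤ B) :
    A2char σ ω ≤ B :=
  iSup_le fun c => iSup_le fun r => iSup_le fun hr => h c r hr

lemma backward_dir (e : EuclideanSpace ℝ (Fin n) ≃ EuclideanSpace ℝ (Fin n))
    (hlip : LipschitzWith 1 ⇑e) {L : ℝ≥0} (hL : LipschitzWith L ⇑e.symm) :
    ∃ C : ℝ≥0∞, 0 < C ∧ C < ⊤ ∧
      ∀ (σ ω : Measure (EuclideanSpace ℝ (Fin n))),
        IsLocallyFiniteMeasure σ → IsLocallyFiniteMeasure ω →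
        A2char (Measure.map ⇑e σ) (Measure.map ⇑e ω) ≤ C * A2char σ ω := by
  set M : ℝ := 2 * ((L : ℝ) * Real.sqrt n + 1) with hMdef
  have hs : (0:ℝ) ≤ Real.sqrt n := Real.sqrt_nonneg _
  have hLnn : (0:ℝ) ≤ (L:ℝ) := L.coe_nonneg
  have hM : (0:ℝ) < M := by positivity
  set x : ℝ≥0∞ := ENNReal.ofReal M ^ n with hxdef
  have hx0 : x ≠ 0 := pow_ne_zero _ (ENNReal.ofReal_pos.2 hM).ne'
  have hxt : x ≠ ⊤ := (ENNReal.pow_lt_top ENNReal.ofReal_lt_top).ne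
  refine ⟨x ^ 2, pos_iff_ne_zero.2 (pow_ne_zero 2 hx0), ENNReal.pow_lt_top hxt.lt_top, ?_⟩
  intro σ ω _ _
  apply A2char_le
  intro c r hr
  have hmeas : Measurable ⇑e := hlip.continuous.measurable
  rw [Measure.map_apply hmeas (measurableSet_euCube c r),
    Measure.map_apply hmeas (measurableSet_euCube c r)]
  set c' : EuclideanSpace ℝ (Fin n) := WithLp.toLp 2 (fun i => e.symm c i - (L : ℝ) * Real.sqrt n * r) with hc'
  have hsub : ⇑e ⁻¹' euCube c r ⊆ euCube c' (M * r) := by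
    intro z hz
    have hcQ : c ∈ euCube c r := fun i => ⟨le_refl _, by linarith⟩
    have hd : dist z (e.symm c) ≤ (L : ℝ) * (Real.sqrt n * r) := by
      have h1 := hL.dist_le_mul (e z) c
      rw [e.symm_apply_apply] at h1
      exact h1.trans (by
        have := dist_le_of_mem_euCube hr.le hz hcQ
        exact mul_le_mul_of_nonneg_left this hLnn)
    intro i
    have h2 : |z i - e.symm c i| ≤ (L : ℝ) * (Real.sqrt n * r) :=
      (abs_coord_le_dist z (e.symm c) i).trans hd
    have h3 := abs_le.1 h2
    constructor
    · simp only [hc']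
      nlinarith [h3.1]
    · simp only [hc']
      nlinarith [h3.2, mul_nonneg (mul_nonneg hLnn hs) hr.le]
  have hV : volume (euCube c r) = ENNReal.ofReal r ^ n := volume_euCube c hr.le
  have hV' : volume (euCube c' (M * r)) = x * ENNReal.ofReal r ^ n := by
    rw [volume_euCube c' (by positivity), ENNReal.ofReal_mul hM.le, mul_pow, hxdef]
  set V : ℝ≥0∞ := ENNReal.ofReal r ^ n with hVdef
  have hV0 : V ≠ 0 := pow_ne_zero _ (ENNReal.ofReal_pos.2 hr).ne'
  have hVt : V ≠ ⊤ := (ENNReal.pow_lt_top ENNReal.ofReal_lt_top).ne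
  have key : ∀ μ : Measure (EuclideanSpace ℝ (Fin n)),
      μ (⇑e ⁻¹' euCube c r) / volume (euCube c r) ≤
        x * (μ (euCube c' (M * r)) / volume (euCube c' (M * r))) := by
    intro μ
    rw [hV, hV']
    calc μ (⇑e ⁻¹' euCube c r) / V ≤ μ (euCube c' (M * r)) / V :=
          ENNReal.div_le_div_right (measure_mono hsub) V
      _ = x * μ (euCube c' (M * r)) / (x * V) := (ENNReal.mul_div_mul_left _ _ hx0 hxt).symm
      _ = x * (μ (euCube c' (M * r)) / (x * V)) := by
          rw [div_eq_mul_inv, div_eq_mul_inv, mul_assoc]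
  calc (σ (⇑e ⁻¹' euCube c r) / volume (euCube c r)) *
        (ω (⇑e ⁻¹' euCube c r) / volume (euCube c r))
      ≤ (x * (σ (euCube c' (M * r)) / volume (euCube c' (M * r)))) *
        (x * (ω (euCube c' (M * r)) / volume (euCube c' (M * r)))) :=
        mul_le_mul' (key σ) (key ω)
    _ = x ^ 2 * ((σ (euCube c' (M * r)) / volume (euCube c' (M * r))) *
        (ω (euCube c' (M * r)) / volume (euCube c' (M * r)))) := by
        rw [mul_mul_mul_comm, sq]
    _ ≤ x ^ 2 * A2char σ ω :=
        mul_le_mul_right (le_A2char σ ω c' (by positivity)) _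

lemma forward_dir (e : EuclideanSpace ℝ (Fin n) ≃ EuclideanSpace ℝ (Fin n))
    (hlip : LipschitzWith 1 ⇑e) (K : ℝ≥0)
    (hshape : ∀ (c : EuclideanSpace ℝ (Fin n)) (r : ℝ), 0 < r →
      ∃ (c₁ : EuclideanSpace ℝ (Fin n)) (r₁ : ℝ) (c₂ : EuclideanSpace ℝ (Fin n)) (r₂ : ℝ),
        0 < r₁ ∧ euCube c₁ r₁ ⊆ ⇑e ⁻¹' (euCube c r) ∧ ⇑e ⁻¹' (euCube c r) ⊆ euCube c₂ r₂ ∧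
        r₂ ≤ (K : ℝ) * r₁)
    {C : ℝ≥0∞} (hC0 : 0 < C) (hCt : C < ⊤)
    (hA : ∀ (σ ω : Measure (EuclideanSpace ℝ (Fin n))),
        IsLocallyFiniteMeasure σ → IsLocallyFiniteMeasure ω →
        A2char (Measure.map ⇑e σ) (Measure.map ⇑e ω) ≤ C * A2char σ ω) :
    ∃ L : ℝ≥0, LipschitzWith L ⇑e.symm := by
  rcases Nat.eq_zero_or_pos n with hn | hn
  · subst hn
    refine ⟨1, LipschitzWith.of_dist_le_mul fun x y => ?_⟩
    have h0 : dist (e.symm x) (e.symm y) = 0 := by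
      rw [EuclideanSpace.dist_eq]
      simp
    rw [h0]
    positivity
  have hmeas : Measurable ⇑e := hlip.continuous.measurable
  -- Step 1: A₂ of mapped Lebesgue measures is at most C
  have hstep1 : A2char (Measure.map ⇑e volume) (Measure.map ⇑e volume) ≤ C := by
    have h1 : A2char (volume : Measure (EuclideanSpace ℝ (Fin n))) volume ≤ 1 := by
      apply A2char_le
      intro c r hr
      rw [ENNReal.div_self (by
            rw [volume_euCube c hr.le]
            exact pow_ne_zero _ (ENNReal.ofReal_pos.2 hr).ne')
          (by
            rw [volume_euCube c hr.le]
            exact (ENNReal.pow_lt_top ENNReal.ofReal_lt_top).ne), one_mul]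
    calc A2char (Measure.map ⇑e volume) (Measure.map ⇑e volume)
        ≤ C * A2char (volume : Measure (EuclideanSpace ℝ (Fin n))) volume :=
          hA volume volume inferInstance inferInstance
      _ ≤ C * 1 := mul_le_mul_right h1 C
      _ = C := mul_one C
  -- the constant
  set D : ℝ≥0∞ := C ^ ((2 * (n : ℝ))⁻¹) with hDdef
  have hDt : D ≠ ⊤ := (ENNReal.rpow_lt_top_of_nonneg (by positivity) hCt.ne).ne
  set M : ℝ := D.toReal with hMdef
  have hM0 : 0 ≤ M := ENNReal.toReal_nonneg
  -- Step 2: the preimage of a cube of side r is inside a cube of side ≤ K * (M * r)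
  have hstep2 : ∀ (c : EuclideanSpace ℝ (Fin n)) (r : ℝ), 0 < r →
      ∀ x y, x ∈ ⇑e ⁻¹' euCube c r → y ∈ ⇑e ⁻¹' euCube c r →
        dist x y ≤ Real.sqrt n * ((K : ℝ) * (M * r)) := by
    intro c r hr x y hx hy
    obtain ⟨c₁, r₁, c₂, r₂, hr₁, hsub₁, hsub₂, hKr⟩ := hshape c r hr
    set V : ℝ≥0∞ := ENNReal.ofReal r ^ n with hVdef
    have hV0 : V ≠ 0 := pow_ne_zero _ (ENNReal.ofReal_pos.2 hr).ne'
    have hVt : V ≠ ⊤ := (ENNReal.pow_lt_top ENNReal.ofReal_lt_top).ne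
    set s : ℝ≥0∞ := volume (⇑e ⁻¹' euCube c r) with hsdef
    -- the A₂ bound at this cube gives (s/V)² ≤ C
    have hsq : (s / V) * (s / V) ≤ C := by
      have h2 := le_A2char (Measure.map ⇑e volume) (Measure.map ⇑e volume) c hr
      rw [Measure.map_apply hmeas (measurableSet_euCube c r),
        volume_euCube c hr.le] at h2
      exact h2.trans hstep1
    have hsV : s / V ≤ C ^ ((2:ℝ)⁻¹) := by
      have h3 := ENNReal.rpow_le_rpow hsq (by norm_num : (0:ℝ) ≤ (2:ℝ)⁻¹)
      rwa [← sq, ← ENNReal.rpow_natCast (s / V) 2, ← ENNReal.rpow_mul,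
        (by norm_num : ((2:ℕ):ℝ) * (2:ℝ)⁻¹ = 1), ENNReal.rpow_one] at h3
    have hsle : s ≤ C ^ ((2:ℝ)⁻¹) * V := (ENNReal.div_le_iff hV0 hVt).1 hsV
    -- lower bound on s from the inner cube
    have hlow : ENNReal.ofReal r₁ ^ n ≤ s := by
      rw [← volume_euCube c₁ hr₁.le]
      exact measure_mono hsub₁
    -- take n-th roots
    have hroot : ENNReal.ofReal r₁ ≤ D * ENNReal.ofReal r := by
      have h4 : (ENNReal.ofReal r₁ ^ n) ^ ((n : ℝ)⁻¹) ≤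
          (C ^ ((2:ℝ)⁻¹) * V) ^ ((n : ℝ)⁻¹) :=
        ENNReal.rpow_le_rpow (hlow.trans hsle) (by positivity)
      have hne : (n : ℝ) ≠ 0 := Nat.cast_ne_zero.2 hn.ne'
      have hA' : (ENNReal.ofReal r₁ ^ n) ^ ((n : ℝ)⁻¹) = ENNReal.ofReal r₁ := by
        rw [← ENNReal.rpow_natCast, ← ENNReal.rpow_mul, mul_inv_cancel₀ hne, ENNReal.rpow_one]
      have hB' : (C ^ ((2:ℝ)⁻¹) * V) ^ ((n : ℝ)⁻¹) = D * ENNReal.ofReal r := by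
        rw [ENNReal.mul_rpow_of_nonneg _ _ (by positivity), ← ENNReal.rpow_mul, hVdef,
          ← ENNReal.rpow_natCast (ENNReal.ofReal r) n, ← ENNReal.rpow_mul,
          mul_inv_cancel₀ hne, ENNReal.rpow_one, ← mul_inv, ← hDdef]
      rwa [hA', hB'] at h4
    have hr₁M : r₁ ≤ M * r := by
      have h5 : ENNReal.ofReal r₁ ≤ ENNReal.ofReal (M * r) := by
        rwa [ENNReal.ofReal_mul hM0, hMdef, ENNReal.ofReal_toReal hDt] at *
      exact (ENNReal.ofReal_le_ofReal_iff (by positivity)).1 h5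
    have hr₂0 : 0 ≤ r₂ := by
      have hxm := hsub₂ hx ⟨0, hn⟩
      linarith [hxm.1, hxm.2]
    calc dist x y ≤ Real.sqrt n * r₂ :=
          dist_le_of_mem_euCube hr₂0 (hsub₂ hx) (hsub₂ hy)
      _ ≤ Real.sqrt n * ((K : ℝ) * (M * r)) := by
          apply mul_le_mul_of_nonneg_left _ (Real.sqrt_nonneg _)
          calc r₂ ≤ (K : ℝ) * r₁ := hKr
            _ ≤ (K : ℝ) * (M * r) := mul_le_mul_of_nonneg_left hr₁M K.coe_nonneg
  -- conclude Lipschitz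
  refine ⟨Real.toNNReal (Real.sqrt n * ((K : ℝ) * M)), LipschitzWith.of_dist_le_mul fun x y => ?_⟩
  rcases eq_or_ne x y with rfl | hxy
  · simp
  · set r : ℝ := dist x y with hrdef
    have hr : 0 < r := dist_pos.2 hxy
    set c : EuclideanSpace ℝ (Fin n) := WithLp.toLp 2 (fun i => min (x i) (y i)) with hc
    have hxQ : x ∈ euCube c r := by
      intro i
      have h := abs_le.1 (abs_coord_le_dist x y i)
      exact ⟨min_le_left _ _, by rcases min_le_iff.1 (le_refl (min (x i) (y i))) with h' | h' <;>
        simp only [hc] <;> rcases le_total (x i) (y i) with h2 | h2 <;>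
        simp [min_eq_left, min_eq_right, h2] <;> linarith [h.1, h.2]⟩
    have hyQ : y ∈ euCube c r := by
      intro i
      have h := abs_le.1 (abs_coord_le_dist x y i)
      exact ⟨min_le_right _ _, by rcases le_total (x i) (y i) with h2 | h2 <;>
        simp only [hc] <;>
        simp [min_eq_left, min_eq_right, h2] <;> linarith [h.1, h.2]⟩
    have hx' : e.symm x ∈ ⇑e ⁻¹' euCube c r := by
      simp only [Set.mem_preimage, e.apply_symm_apply]; exact hxQ
    have hy' : e.symm y ∈ ⇑e ⁻¹' euCube c r := by
      simp only [Set.mem_preimage, e.apply_symm_apply]; exact hyQ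
    have hd := hstep2 c r hr _ _ hx' hy'
    calc dist (e.symm x) (e.symm y) ≤ Real.sqrt n * ((K : ℝ) * (M * r)) := hd
      _ = (Real.sqrt n * ((K : ℝ) * M)) * r := by ring
      _ ≤ (Real.toNNReal (Real.sqrt n * ((K : ℝ) * M)) : ℝ) * dist x y := by
          rw [← hrdef]
          apply mul_le_mul_of_nonneg_right _ hr.le
          rw [Real.coe_toNNReal']
          exact le_max_left _ _

end AuxStmt13

/-- Let `Φ : ℝⁿ → ℝⁿ` be a shape-preserving invertible Lipschitz map with `‖DΦ‖_∞ ≤ 1`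
(encoded by `LipschitzWith 1`), differentiable, and for which the change of variables formula
holds.  Then `Φ` is `A₂`-stable (there is `C` with `A₂(Φ_*σ, Φ_*ω) ≤ C·A₂(σ,ω)` for all pairs
of locally finite positive Borel measures) if and only if `Φ` is biLipschitz (equivalently,
its inverse is Lipschitz). -/
theorem stmt13 (n : ℕ) (e : EuclideanSpace ℝ (Fin n) ≃ EuclideanSpace ℝ (Fin n))
    (hlip : LipschitzWith 1 ⇑e) (hdiff : Differentiable ℝ ⇑e)
    (K : ℝ≥0)
    (hshape : ∀ (c : EuclideanSpace ℝ (Fin n)) (r : ℝ), 0 < r →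
      ∃ (c₁ : EuclideanSpace ℝ (Fin n)) (r₁ : ℝ) (c₂ : EuclideanSpace ℝ (Fin n)) (r₂ : ℝ),
        0 < r₁ ∧ euCube c₁ r₁ ⊆ ⇑e ⁻¹' (euCube c r) ∧ ⇑e ⁻¹' (euCube c r) ⊆ euCube c₂ r₂ ∧
        r₂ ≤ (K : ℝ) * r₁)
    (hcv : ∀ s : Set (EuclideanSpace ℝ (Fin n)), MeasurableSet s →
      volume (⇑e '' s) = ∫⁻ x in s, ENNReal.ofReal |(fderiv ℝ ⇑e x).det|) :
    (∃ C : ℝ≥0∞, 0 < C ∧ C < ⊤ ∧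
        ∀ (σ ω : Measure (EuclideanSpace ℝ (Fin n))),
          IsLocallyFiniteMeasure σ → IsLocallyFiniteMeasure ω →
          A2char (Measure.map ⇑e σ) (Measure.map ⇑e ω) ≤ C * A2char σ ω) ↔
      (∃ L : ℝ≥0, LipschitzWith L ⇑e.symm) := by
  constructor
  · rintro ⟨C, hC0, hCt, hA⟩
    exact forward_dir e hlip K hshape hC0 hCt hA
  · rintro ⟨L, hL⟩
    exact backward_dir e hlip hL
end

section
/- Let p ∈ (1,∞), δ ∈ (0,1/2), and let P ⊂ Q be cubes in ℝⁿ. Suppose F : Q × P₁ → ℝ satisfies: (i) for each x ∈ Q, the function y₁ ↦ F(x,y₁) is M-piecewise monotone; (ii) for each δ, sup over x ∈ Q outside the δ-extended halo of P and y₁ ∈ P₁ of |F(x,y₁)| is finite with bound C_δ; (iii) the function x ↦ 𝟏_{H_δ^{P;Q}}(x) ∫_{P₁} |F(x,y₁)| dy₁ tends to 0 in L^p(Q) as δ → 0. Then ∫_{P₁} F(x,y₁) s_k(y₁) dy₁ → 0 in L^p(Q) as k → ∞, where s_k is the alternating ±1 function on P₁ with 2^k sign changes. -/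
open MeasureTheory Set Filter ENNReal

/-- The `Q`-extended `δ`-halo of the cube `P` (lower corner `p`, side `ℓP`) inside the cube `Q`
(lower corner `q`, side `ℓQ`):
`H_δ^{P;Q} = {x ∈ Q : dist(x_j, ∂P_j) < δ·ℓ(P) for some j}`. -/
def extHalo {n : ℕ} (p : EuclideanSpace ℝ (Fin n)) (ℓP : ℝ)
    (q : EuclideanSpace ℝ (Fin n)) (ℓQ : ℝ) (δ : ℝ) : Set (EuclideanSpace ℝ (Fin n)) :=
  {x ∈ euCube q ℓQ | ∃ j, min |x j - p j| |x j - (p j + ℓP)| < δ * ℓP}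

/-- The alternating ±1 step function with `2^k` sign changes supported on `[c, c + L)`. -/
noncomputable def sAltOn (k : ℕ) (c L : ℝ) (x : ℝ) : ℝ :=
  if x ∈ Ico c (c + L) then (if Even ⌊(x - c) / L * 2 ^ k⌋ then 1 else -1) else 0

open intervalIntegral

lemma sAlt_abs_le (k : ℕ) (c L x : ℝ) : |sAltOn k c L x| ≤ 1 := by
  unfold sAltOn; split_ifs <;> simp

lemma sAlt_measurable (k : ℕ) (c L : ℝ) : Measurable (sAltOn k c L) := by
  unfold sAltOn
  refine Measurable.ite measurableSet_Ico (Measurable.ite ?_ measurable_const measurable_const)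
    measurable_const
  have hfl : Measurable fun x : ℝ => ⌊(x - c) / L * 2 ^ k⌋ :=
    Int.measurable_floor.comp (((measurable_id.sub measurable_const).div_const L).mul_const _)
  exact hfl (MeasurableSet.of_discrete (s := {m : ℤ | Even m}))

lemma sAlt_shift (k : ℕ) {c L : ℝ} (hL : 0 < L) {y : ℝ} (hy : c ≤ y)
    (hy2 : y + L / 2 ^ k < c + L) :
    sAltOn k c L (y + L / 2 ^ k) = - sAltOn k c L y := by
  have h2 : (0:ℝ) < 2 ^ k := by positivity
  have hh : 0 < L / 2 ^ k := by positivity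
  have hyI : y ∈ Ico c (c + L) := ⟨hy, by linarith⟩
  have hyI2 : y + L / 2 ^ k ∈ Ico c (c + L) := ⟨by linarith, hy2⟩
  have key : (y + L / 2 ^ k - c) / L * 2 ^ k = (y - c) / L * 2 ^ k + 1 := by
    field_simp; ring
  simp only [sAltOn, if_pos hyI, if_pos hyI2, key, Int.floor_add_one]
  rcases Int.even_or_odd ⌊(y - c) / L * 2 ^ k⌋ with h | h
  · rw [if_pos h, if_neg (by simpa [Int.even_add_one] using h)]
  · have h' : ¬ Even ⌊(y - c) / L * 2 ^ k⌋ := Int.not_even_iff_odd.mpr h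
    rw [if_neg h', if_pos (by simpa [Int.even_add_one] using h'), neg_neg]

lemma sAlt_sq {k : ℕ} {c L : ℝ} {y : ℝ} (hy : y ∈ Ico c (c + L)) :
    sAltOn k c L y * sAltOn k c L y = 1 := by
  unfold sAltOn; rw [if_pos hy]; split_ifs <;> norm_num

lemma chain_mono {t : ℕ → ℝ} {M : ℕ} (hstep : ∀ i < M, t i ≤ t (i + 1)) :
    ∀ j ≤ M, ∀ i ≤ j, t i ≤ t j := by
  intro j hj
  induction j with
  | zero => intro i hi; interval_cases i; rfl
  | succ m ih =>
    intro i hi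
    rcases Nat.lt_or_ge i (m + 1) with h | h
    · exact le_trans (ih (by omega) i (by omega)) (hstep m (by omega))
    · have : i = m + 1 := by omega
      simp [this]

lemma integrable_of_pieces {M : ℕ} {a L : ℝ} (hL : 0 < L) {g : ℝ → ℝ} {C : ℝ}
    (hC : ∀ y ∈ Icc a (a + L), |g y| ≤ C) {t : ℕ → ℝ}
    (ht0 : t 0 = a) (htM : t M = a + L) (hstep : ∀ i < M, t i ≤ t (i + 1))
    (hpm : ∀ i < M, MonotoneOn g (Ioo (t i) (t (i + 1))) ∨
      AntitoneOn g (Ioo (t i) (t (i + 1)))) :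
    IntervalIntegrable g volume a (a + L) := by
  classical
  set S : ℕ → Set ℝ := fun i => if i < M then Ioo (t i) (t (i + 1)) else ∅ with hS
  set T : Set ℝ := ⋃ i ∈ Finset.range (M + 1), {t i} with hT
  have hTnull : volume T = 0 := by
    refine measure_biUnion_null_iff ?_ |>.mpr ?_
    · exact (Finset.range (M + 1) : Finset ℕ).countable_toSet
    · intro i _; exact Real.volume_singleton
  have hsub : Ioc a (a + L) ⊆ (⋃ i, S i) ∪ T := by
    intro y hy
    by_cases hyT : y ∈ T
    · exact Or.inr hyT
    · left
      have hex : ∃ j, y ≤ t j := ⟨M, by rw [htM]; exact hy.2⟩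
      have hj : y ≤ t (Nat.find hex) := Nat.find_spec hex
      have hjM : Nat.find hex ≤ M := Nat.find_le (by rw [htM]; exact hy.2)
      have hj0 : Nat.find hex ≠ 0 := by
        intro h
        rw [h, ht0] at hj
        exact absurd hj (not_le.mpr hy.1)
      obtain ⟨i, hi⟩ := Nat.exists_eq_succ_of_ne_zero hj0
      have hlt : t i < y := lt_of_not_ge (Nat.find_min hex (by omega))
      have hiM : i < M := by omega
      have hj' : y ≤ t (i + 1) := by rw [← Nat.succ_eq_add_one, ← hi]; exact hj
      have hne : y ≠ t (i + 1) := by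
        intro h
        exact hyT (hT ▸ mem_biUnion (Finset.mem_range.mpr (by omega : i + 1 < M + 1))
          (mem_singleton_iff.mpr h))
      refine mem_iUnion.mpr ⟨i, ?_⟩
      rw [hS]
      simp only [if_pos hiM]
      exact ⟨hlt, lt_of_le_of_ne hj' hne⟩
  have hAE : AEMeasurable g (volume.restrict (Ioc a (a + L))) := by
    have hU : AEMeasurable g (volume.restrict (⋃ i, S i)) := by
      rw [aemeasurable_iUnion_iff]
      intro i
      rw [hS]
      by_cases hi : i < M
      · simp only [if_pos hi]
        rcases hpm i hi with h | h
        · exact aemeasurable_restrict_of_monotoneOn measurableSet_Ioo h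
        · exact aemeasurable_restrict_of_antitoneOn measurableSet_Ioo h
      · simp only [if_neg hi, Measure.restrict_empty]
        exact aemeasurable_zero_measure
    have hTz : AEMeasurable g (volume.restrict T) := by
      rw [Measure.restrict_eq_zero.mpr hTnull]
      exact aemeasurable_zero_measure
    have h1 : AEMeasurable g (volume.restrict ((⋃ i, S i) ∪ T)) :=
      (hU.add_measure hTz).mono_measure (Measure.restrict_union_le _ _)
    exact h1.mono_measure (Measure.restrict_mono hsub le_rfl)
  rw [intervalIntegrable_iff_integrableOn_Ioc_of_le (by linarith)]
  refine Integrable.mono' (g := fun _ => C)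
    ((integrableOn_const_iff (C := C)).mpr (Or.inr measure_Ioc_lt_top)) hAE.aestronglyMeasurable ?_
  rw [ae_restrict_iff' measurableSet_Ioc]
  exact ae_of_all _ fun y hy => hC y ⟨le_of_lt hy.1, hy.2⟩

lemma piece_bound_mono (k : ℕ) {a L : ℝ} (hL : 0 < L) {g : ℝ → ℝ} {C : ℝ}
    (hgi : IntervalIntegrable g volume a (a + L))
    (hC : ∀ y ∈ Icc a (a + L), |g y| ≤ C)
    {u v : ℝ} (hau : a ≤ u) (huv : u ≤ v) (hvb : v ≤ a + L)
    (hm : MonotoneOn g (Ioo u v)) :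
    |∫ y in u..v, g y * sAltOn k a L y| ≤ 4 * C * (L / 2 ^ k) := by
  set b := a + L with hb
  set s := sAltOn k a L with hs
  set h := L / 2 ^ k with hh
  have h2 : (1:ℝ) ≤ 2 ^ k := one_le_pow₀ (by norm_num)
  have hhpos : 0 < h := by positivity
  have hhL : h ≤ L := by
    rw [hh, div_le_iff₀ (by positivity)]; nlinarith
  have hC0 : 0 ≤ C := le_trans (abs_nonneg _) (hC a ⟨le_refl a, by linarith⟩)
  -- integrability toolkit
  have gint : ∀ {c d : ℝ}, a ≤ c → c ≤ d → d ≤ b → IntervalIntegrable g volume c d := by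
    intro c d h1 h2 h3
    refine hgi.mono_set' ?_
    rw [uIoc_of_le h2, uIoc_of_le (by linarith : a ≤ b)]
    exact Ioc_subset_Ioc h1 h3
  have sbound : ∀ (f : ℝ → ℝ) (y : ℝ), ‖f y * s y‖ ≤ ‖f y‖ := by
    intro f y
    rw [Real.norm_eq_abs, Real.norm_eq_abs, abs_mul]
    exact mul_le_of_le_one_right (abs_nonneg _) (sAlt_abs_le k a L y)
  have gsint : ∀ {c d : ℝ}, a ≤ c → c ≤ d → d ≤ b →
      IntervalIntegrable (fun y => g y * s y) volume c d := by
    intro c d h1 h2 h3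
    exact (gint h1 h2 h3).mono_fun
      (((gint h1 h2 h3).def'.aestronglyMeasurable).mul
        ((sAlt_measurable k a L).aestronglyMeasurable))
      (Eventually.of_forall fun y => sbound g y)
  have gshiftint : ∀ {c d : ℝ}, a + h ≤ c → c ≤ d → d ≤ b →
      IntervalIntegrable (fun y => g (y - h)) volume c d := by
    intro c d h1 h2 h3
    have := (gint (by linarith : a ≤ c - h) (by linarith : c - h ≤ d - h)
      (by linarith : d - h ≤ b)).comp_sub_right h
    simpa using this
  have gshiftsint : ∀ {c d : ℝ}, a + h ≤ c → c ≤ d → d ≤ b →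
      IntervalIntegrable (fun y => g (y - h) * s y) volume c d := by
    intro c d h1 h2 h3
    exact (gshiftint h1 h2 h3).mono_fun
      (((gshiftint h1 h2 h3).def'.aestronglyMeasurable).mul
        ((sAlt_measurable k a L).aestronglyMeasurable))
      (Eventually.of_forall fun y => by simpa using sbound (fun z => g (z - h)) y)
  -- constant bound on subintervals
  have cbound : ∀ {c d : ℝ}, a ≤ c → c ≤ d → d ≤ b →
      |∫ y in c..d, g y * s y| ≤ C * (d - c) := by
    intro c d h1 h2' h3
    have := intervalIntegral.norm_integral_le_of_norm_le_const (C := C)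
      (f := fun y => g y * s y) (a := c) (b := d) ?_
    · rw [Real.norm_eq_abs] at this
      calc |∫ y in c..d, g y * s y| ≤ C * |d - c| := this
        _ = C * (d - c) := by rw [abs_of_nonneg (by linarith)]
    · intro y hy
      rw [uIoc_of_le h2'] at hy
      exact le_trans (sbound g y) (hC y ⟨by linarith [hy.1], by linarith [hy.2]⟩)
  set v' := min v (b - h) with hv'
  have hv'v : v' ≤ v := min_le_left _ _
  have hv'bh : v' ≤ b - h := min_le_right _ _
  have hvv' : v - v' ≤ h := by
    rcases min_cases v (b - h) with ⟨he, _⟩ | ⟨he, _⟩ <;> rw [hv', he] <;> linarith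
  by_cases h1 : v' ≤ u
  · -- short interval
    have hvu : v - u ≤ h := by
      rcases min_le_iff.mp h1 with hc | hc <;> linarith
    calc |∫ y in u..v, g y * s y| ≤ C * (v - u) := cbound hau huv hvb
      _ ≤ 4 * C * h := by nlinarith
  push_neg at h1
  have huv' : u ≤ v' := le_of_lt h1
  have hav' : a ≤ v' := le_trans hau huv'
  have hsplit : (∫ y in u..v, g y * s y) =
      (∫ y in u..v', g y * s y) + ∫ y in v'..v, g y * s y :=
    (integral_add_adjacent_intervals (gsint hau huv' (by linarith))
      (gsint hav' hv'v hvb)).symm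
  have htail : |∫ y in v'..v, g y * s y| ≤ C * h := by
    calc |∫ y in v'..v, g y * s y| ≤ C * (v - v') := cbound hav' hv'v hvb
      _ ≤ C * h := by nlinarith
  -- the reflection identity
  have hne_ae : ∀ r : ℝ, ∀ᵐ y : ℝ, y ≠ r := by
    intro r
    rw [ae_iff]
    simpa [not_not, setOf_eq_eq_singleton] using Real.volume_singleton (a := r)
  have hrefl : (∫ y in u..v', g y * s y) =
      - ∫ y in (u + h)..(v' + h), g (y - h) * s y := by
    have step1 : (∫ y in u..v', g y * s y) = ∫ y in u..v', -(g y * s (y + h)) := by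
      refine integral_congr_ae ?_
      filter_upwards [hne_ae (b - h)] with y hy hymem
      rw [uIoc_of_le huv'] at hymem
      have hyb : y + h < b := by
        rcases lt_or_eq_of_le (le_trans hymem.2 hv'bh) with hlt | heq
        · linarith
        · exact absurd heq hy
      rw [hs, sAlt_shift k hL (by linarith [hymem.1] : a ≤ y) hyb]
      ring
    have step2 : (∫ y in u..v', g y * s (y + h)) = ∫ y in (u + h)..(v' + h), g (y - h) * s y := by
      have := intervalIntegral.integral_comp_add_right (a := u) (b := v')
        (fun z => g (z - h) * s z) h
      simpa [add_sub_cancel_right] using this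
    rw [step1, intervalIntegral.integral_neg, step2]
  by_cases h2 : v' < u + h
  · -- main part short
    have hmain : |∫ y in u..v', g y * s y| ≤ C * h := by
      calc |∫ y in u..v', g y * s y| ≤ C * (v' - u) := cbound hau huv' (by linarith)
        _ ≤ C * h := by nlinarith
    rw [hsplit]
    calc |(∫ y in u..v', g y * s y) + ∫ y in v'..v, g y * s y|
        ≤ |∫ y in u..v', g y * s y| + |∫ y in v'..v, g y * s y| := abs_add_le _ _
      _ ≤ 4 * C * h := by nlinarith
  push_neg at h2
  -- main estimate
  have hA1 : (∫ y in u..v', g y * s y) =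
      (∫ y in u..(u + h), g y * s y) + ∫ y in (u + h)..v', g y * s y :=
    (integral_add_adjacent_intervals (gsint hau (by linarith) (by linarith))
      (gsint (by linarith) h2 (by linarith))).symm
  have hA2 : (∫ y in (u + h)..(v' + h), g (y - h) * s y) =
      (∫ y in (u + h)..v', g (y - h) * s y) + ∫ y in v'..(v' + h), g (y - h) * s y :=
    (integral_add_adjacent_intervals (gshiftsint (by linarith) h2 (by linarith))
      (gshiftsint (by linarith) (by linarith) (by linarith))).symm
  have hgmid := gsint (by linarith : a ≤ u + h) h2 (by linarith : v' ≤ b)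
  have hgsmid := gshiftsint (by linarith : a + h ≤ u + h) h2 (by linarith : v' ≤ b)
  have hA3 : (∫ y in (u + h)..v', (g y - g (y - h)) * s y) =
      (∫ y in (u + h)..v', g y * s y) - ∫ y in (u + h)..v', g (y - h) * s y := by
    rw [← integral_sub hgmid hgsmid]
    congr 1
    funext y
    ring
  -- bound the middle difference term
  have hDint : IntervalIntegrable (fun y => g y - g (y - h)) volume (u + h) v' :=
    (gint (by linarith) h2 (by linarith)).sub (gshiftint (by linarith) h2 (by linarith))
  have hDsint : IntervalIntegrable (fun y => (g y - g (y - h)) * s y) volume (u + h) v' := by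
    refine hDint.mono_fun ((hDint.def'.aestronglyMeasurable).mul
      ((sAlt_measurable k a L).aestronglyMeasurable)) (Eventually.of_forall fun y => by
        simpa using sbound (fun z => g z - g (z - h)) y)
  have hB3 : |∫ y in (u + h)..v', (g y - g (y - h)) * s y| ≤
      ∫ y in (u + h)..v', |g y - g (y - h)| := by
    calc |∫ y in (u + h)..v', (g y - g (y - h)) * s y|
        ≤ ∫ y in (u + h)..v', |(g y - g (y - h)) * s y| :=
          intervalIntegral.abs_integral_le_integral_abs h2
      _ ≤ ∫ y in (u + h)..v', |g y - g (y - h)| := by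
          refine intervalIntegral.integral_mono_on h2 hDsint.abs hDint.abs fun y _ => ?_
          have := sbound (fun z => g z - g (z - h)) y
          simpa [Real.norm_eq_abs, abs_mul] using this
  have hB4 : (∫ y in (u + h)..v', |g y - g (y - h)|) = ∫ y in (u + h)..v', (g y - g (y - h)) := by
    refine integral_congr_ae ?_
    filter_upwards [hne_ae v'] with y hy hymem
    rw [uIoc_of_le h2] at hymem
    have hyv : y < v' := lt_of_le_of_ne hymem.2 hy
    have hmem1 : y - h ∈ Ioo u v := ⟨by linarith [hymem.1], by linarith⟩
    have hmem2 : y ∈ Ioo u v := ⟨by linarith [hymem.1], by linarith⟩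
    exact abs_of_nonneg (by linarith [hm hmem1 hmem2 (by linarith : y - h ≤ y)])
  have hE2 : (∫ y in (u + h)..v', g (y - h)) = ∫ y in u..(v' - h), g y := by
    have := intervalIntegral.integral_comp_sub_right (a := u + h) (b := v') g h
    simpa using this
  have hE1 : (∫ y in (u + h)..v', (g y - g (y - h))) =
      (∫ y in (u + h)..v', g y) - ∫ y in u..(v' - h), g y := by
    rw [← hE2]
    exact integral_sub (gint (by linarith) h2 (by linarith))
      (gshiftint (by linarith) h2 (by linarith))
  have hE3 : (∫ y in u..(u + h), g y) + (∫ y in (u + h)..v', g y) = ∫ y in u..v', g y :=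
    integral_add_adjacent_intervals (gint hau (by linarith) (by linarith))
      (gint (by linarith) h2 (by linarith))
  have hE4 : (∫ y in u..(v' - h), g y) + (∫ y in (v' - h)..v', g y) = ∫ y in u..v', g y :=
    integral_add_adjacent_intervals (gint hau (by linarith) (by linarith))
      (gint (by linarith) (by linarith) (by linarith))
  have hgbd : ∀ {c d : ℝ}, a ≤ c → c ≤ d → d ≤ b → |∫ y in c..d, g y| ≤ C * (d - c) := by
    intro c d hc1 hc2 hc3
    have := intervalIntegral.norm_integral_le_of_norm_le_const (C := C)
      (f := g) (a := c) (b := d) ?_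
    · rw [Real.norm_eq_abs] at this
      calc |∫ y in c..d, g y| ≤ C * |d - c| := this
        _ = C * (d - c) := by rw [abs_of_nonneg (by linarith)]
    · intro y hy
      rw [uIoc_of_le hc2] at hy
      exact hC y ⟨by linarith [hy.1], by linarith [hy.2]⟩
  have hB6a : |∫ y in (v' - h)..v', g y| ≤ C * h := by
    have := hgbd (by linarith : a ≤ v' - h) (by linarith : v' - h ≤ v') (by linarith : v' ≤ b)
    calc |∫ y in (v' - h)..v', g y| ≤ C * (v' - (v' - h)) := this
      _ = C * h := by ring_nf
  have hB6b : |∫ y in u..(u + h), g y| ≤ C * h := by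
    have := hgbd hau (by linarith : u ≤ u + h) (by linarith : u + h ≤ b)
    calc |∫ y in u..(u + h), g y| ≤ C * (u + h - u) := this
      _ = C * h := by ring_nf
  have hB1 : |∫ y in u..(u + h), g y * s y| ≤ C * h := by
    have := cbound hau (by linarith : u ≤ u + h) (by linarith : u + h ≤ b)
    calc |∫ y in u..(u + h), g y * s y| ≤ C * (u + h - u) := this
      _ = C * h := by ring_nf
  have hB2 : |∫ y in v'..(v' + h), g (y - h) * s y| ≤ C * h := by
    have hbd := intervalIntegral.norm_integral_le_of_norm_le_const (C := C)
      (f := fun y => g (y - h) * s y) (a := v') (b := v' + h) ?_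
    · rw [Real.norm_eq_abs] at hbd
      calc |∫ y in v'..(v' + h), g (y - h) * s y| ≤ C * |v' + h - v'| := hbd
        _ = C * h := by rw [abs_of_nonneg (by linarith)]; ring_nf
    · intro y hy
      rw [uIoc_of_le (by linarith : v' ≤ v' + h)] at hy
      have hb1 := sbound (fun z => g (z - h)) y
      simp only [Real.norm_eq_abs] at hb1 ⊢
      exact le_trans hb1 (hC (y - h) ⟨by linarith [hy.1], by linarith [hy.2]⟩)
  -- combine
  have hmid : |∫ y in (u + h)..v', (g y - g (y - h)) * s y| ≤ 2 * (C * h) := by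
    calc |∫ y in (u + h)..v', (g y - g (y - h)) * s y|
        ≤ ∫ y in (u + h)..v', |g y - g (y - h)| := hB3
      _ = (∫ y in (v' - h)..v', g y) - ∫ y in u..(u + h), g y := by
          rw [hB4, hE1]; linarith
      _ ≤ 2 * (C * h) := by
          have := abs_le.mp hB6a
          have := abs_le.mp hB6b
          linarith [this.1, this.2]
  have hII : |∫ y in u..v', g y * s y| ≤ 2 * (C * h) := by
    have key : (∫ y in u..v', g y * s y) + (∫ y in u..v', g y * s y) =
        (∫ y in (u + h)..v', (g y - g (y - h)) * s y)
          + (∫ y in u..(u + h), g y * s y) - ∫ y in v'..(v' + h), g (y - h) * s y := by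
      rw [hA3]
      have := hrefl
      rw [hA2] at this
      linarith [hA1]
    have habs : |(∫ y in u..v', g y * s y) + (∫ y in u..v', g y * s y)| ≤ 4 * (C * h) := by
      rw [key]
      have t1 := abs_le.mp hmid
      have t2 := abs_le.mp hB1
      have t3 := abs_le.mp hB2
      rw [abs_le]
      constructor <;> linarith
    rw [← two_mul, abs_mul] at habs
    have h2' : |(2:ℝ)| = 2 := by norm_num
    rw [h2'] at habs
    linarith
  rw [hsplit]
  have hCh : 0 ≤ C * h := mul_nonneg hC0 hhpos.le
  calc |(∫ y in u..v', g y * s y) + ∫ y in v'..v, g y * s y|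
      ≤ |∫ y in u..v', g y * s y| + |∫ y in v'..v, g y * s y| := abs_add_le _ _
    _ ≤ 4 * C * h := by linarith

lemma piece_bound (k : ℕ) {a L : ℝ} (hL : 0 < L) {g : ℝ → ℝ} {C : ℝ}
    (hgi : IntervalIntegrable g volume a (a + L))
    (hC : ∀ y ∈ Icc a (a + L), |g y| ≤ C)
    {u v : ℝ} (hau : a ≤ u) (huv : u ≤ v) (hvb : v ≤ a + L)
    (hm : MonotoneOn g (Ioo u v) ∨ AntitoneOn g (Ioo u v)) :
    |∫ y in u..v, g y * sAltOn k a L y| ≤ 4 * C * (L / 2 ^ k) := by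
  rcases hm with hm | hm
  · exact piece_bound_mono k hL hgi hC hau huv hvb hm
  · have hneg : MonotoneOn (fun y => -g y) (Ioo u v) := fun x hx y hy hxy =>
      neg_le_neg (hm hx hy hxy)
    have hCneg : ∀ y ∈ Icc a (a + L), |(fun y => -g y) y| ≤ C := fun y hy => by
      simpa [abs_neg] using hC y hy
    have := piece_bound_mono k hL hgi.neg hCneg hau huv hvb hneg
    have heq : (∫ y in u..v, (-g) y * sAltOn k a L y) =
        - ∫ y in u..v, g y * sAltOn k a L y := by
      simp only [Pi.neg_apply, neg_mul]
      exact intervalIntegral.integral_neg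
    rw [heq, abs_neg] at this
    exact this

lemma whole_bound (k M : ℕ) {a L : ℝ} (hL : 0 < L) {g : ℝ → ℝ} {C : ℝ}
    (hgi : IntervalIntegrable g volume a (a + L))
    (hC : ∀ y ∈ Icc a (a + L), |g y| ≤ C) {t : ℕ → ℝ}
    (ht0 : t 0 = a) (htM : t M = a + L) (hstep : ∀ i < M, t i ≤ t (i + 1))
    (hpm : ∀ i < M, MonotoneOn g (Ioo (t i) (t (i + 1))) ∨
      AntitoneOn g (Ioo (t i) (t (i + 1)))) :
    |∫ y in a..(a + L), g y * sAltOn k a L y| ≤ M * (4 * C * (L / 2 ^ k)) := by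
  have tmono : ∀ j ≤ M, ∀ i ≤ j, t i ≤ t j := chain_mono hstep
  have hta : ∀ i ≤ M, a ≤ t i ∧ t i ≤ a + L := fun i hi =>
    ⟨ht0 ▸ tmono i hi 0 (Nat.zero_le _), htM ▸ tmono M le_rfl i hi⟩
  set s := sAltOn k a L with hs
  have sbound : ∀ (f : ℝ → ℝ) (y : ℝ), ‖f y * s y‖ ≤ ‖f y‖ := by
    intro f y
    rw [Real.norm_eq_abs, Real.norm_eq_abs, abs_mul]
    exact mul_le_of_le_one_right (abs_nonneg _) (sAlt_abs_le k a L y)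
  have gsint : ∀ {c d : ℝ}, a ≤ c → c ≤ d → d ≤ a + L →
      IntervalIntegrable (fun y => g y * s y) volume c d := by
    intro c d h1 h2 h3
    have hg' : IntervalIntegrable g volume c d := by
      refine hgi.mono_set' ?_
      rw [uIoc_of_le h2, uIoc_of_le (by linarith : a ≤ a + L)]
      exact Ioc_subset_Ioc h1 h3
    exact hg'.mono_fun ((hg'.def'.aestronglyMeasurable).mul
      ((sAlt_measurable k a L).aestronglyMeasurable))
      (Eventually.of_forall fun y => sbound g y)
  have hint : ∀ i < M, IntervalIntegrable (fun y => g y * s y) volume (t i) (t (i + 1)) :=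
    fun i hi => gsint (hta i hi.le).1 (hstep i hi) (hta (i + 1) hi).2
  have hsum : ∑ i ∈ Finset.range M, ∫ y in (t i)..(t (i + 1)), g y * s y =
      ∫ y in a..(a + L), g y * s y := by
    rw [intervalIntegral.sum_integral_adjacent_intervals hint, ht0, htM]
  rw [← hsum]
  calc |∑ i ∈ Finset.range M, ∫ y in (t i)..(t (i + 1)), g y * s y|
      ≤ ∑ i ∈ Finset.range M, |∫ y in (t i)..(t (i + 1)), g y * s y| :=
        Finset.abs_sum_le_sum_abs _ _
    _ ≤ ∑ _i ∈ Finset.range M, (4 * C * (L / 2 ^ k)) := by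
        refine Finset.sum_le_sum fun i hi => ?_
        have hi' := Finset.mem_range.mp hi
        exact piece_bound k hL hgi hC (hta i hi'.le).1 (hstep i hi') (hta (i + 1) hi').2
          (hpm i hi')
    _ = M * (4 * C * (L / 2 ^ k)) := by
        rw [Finset.sum_const, Finset.card_range, nsmul_eq_mul]

lemma halo_bound (k : ℕ) {a L : ℝ} (hL : 0 < L) (g : ℝ → ℝ) :
    |∫ y in a..(a + L), g y * sAltOn k a L y| ≤ ∫ y in a..(a + L), |g y| := by
  set s := sAltOn k a L with hs
  have hab : a ≤ a + L := by linarith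
  have sbound : ∀ (f : ℝ → ℝ) (y : ℝ), ‖f y * s y‖ ≤ ‖f y‖ := by
    intro f y
    rw [Real.norm_eq_abs, Real.norm_eq_abs, abs_mul]
    exact mul_le_of_le_one_right (abs_nonneg _) (sAlt_abs_le k a L y)
  have hne_ae : ∀ r : ℝ, ∀ᵐ y : ℝ, y ≠ r := by
    intro r
    rw [ae_iff]
    simpa [not_not, setOf_eq_eq_singleton] using Real.volume_singleton (a := r)
  by_cases hg : IntervalIntegrable g volume a (a + L)
  · have hgs : IntervalIntegrable (fun y => g y * s y) volume a (a + L) :=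
      hg.mono_fun ((hg.def'.aestronglyMeasurable).mul
        ((sAlt_measurable k a L).aestronglyMeasurable))
        (Eventually.of_forall fun y => sbound g y)
    calc |∫ y in a..(a + L), g y * s y| ≤ ∫ y in a..(a + L), |g y * s y| :=
          intervalIntegral.abs_integral_le_integral_abs hab
      _ ≤ ∫ y in a..(a + L), |g y| := by
          refine intervalIntegral.integral_mono_on hab hgs.abs hg.abs fun y _ => ?_
          have := sbound g y
          simpa [Real.norm_eq_abs, abs_mul] using this
  · have hgs : ¬ IntervalIntegrable (fun y => g y * s y) volume a (a + L) := by
      intro hgs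
      apply hg
      have hw : IntervalIntegrable (fun y => (g y * s y) * s y) volume a (a + L) :=
        hgs.mono_fun ((hgs.def'.aestronglyMeasurable).mul
          ((sAlt_measurable k a L).aestronglyMeasurable))
          (Eventually.of_forall fun y => by simpa using sbound (fun z => g z * s z) y)
      refine hw.congr_ae ?_
      rw [uIoc_of_le hab]
      have hmem := ae_restrict_mem (μ := volume) (measurableSet_Ioc (a := a) (b := a + L))
      filter_upwards [hmem, ae_restrict_of_ae (hne_ae (a + L))] with y hy1 hy2
      have hyI : y ∈ Ico a (a + L) := ⟨hy1.1.le, lt_of_le_of_ne hy1.2 hy2⟩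
      show g y * s y * s y = g y
      rw [mul_assoc, sAlt_sq hyI, mul_one]
    rw [intervalIntegral.integral_undef hgs, abs_zero]
    exact intervalIntegral.integral_nonneg hab fun y _ => abs_nonneg _

lemma euCube_measurable {n : ℕ} (c : EuclideanSpace ℝ (Fin n)) (r : ℝ) :
    MeasurableSet (euCube c r) := by
  have : euCube c r =
      ⋂ i, ((EuclideanSpace.proj i : EuclideanSpace ℝ (Fin n) →L[ℝ] ℝ) ⁻¹'
        Icc (c i) (c i + r)) := by
    ext x
    simp [euCube, EuclideanSpace.proj, mem_iInter, mem_Icc]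
  rw [this]
  exact MeasurableSet.iInter fun i =>
    ((EuclideanSpace.proj i).continuous.measurable measurableSet_Icc)

lemma euCube_volume_lt_top {n : ℕ} (c : EuclideanSpace ℝ (Fin n)) {r : ℝ} (hr : 0 < r) :
    volume (euCube c r) < ⊤ := by
  have hsub : euCube c r ⊆ Metric.closedBall c (Real.sqrt n * r) := by
    intro x hx
    rw [Metric.mem_closedBall, EuclideanSpace.dist_eq]
    have hbd : ∀ i, dist (x i) (c i) ^ 2 ≤ r ^ 2 := by
      intro i
      have h1 := (hx i).1
      have h2 := (hx i).2
      rw [Real.dist_eq]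
      have : |x i - c i| ≤ r := abs_le.mpr ⟨by linarith, by linarith⟩
      exact pow_le_pow_left₀ (abs_nonneg _) this 2
    calc Real.sqrt (∑ i, dist (x i) (c i) ^ 2) ≤ Real.sqrt (∑ _i : Fin n, r ^ 2) :=
          Real.sqrt_le_sqrt (Finset.sum_le_sum fun i _ => hbd i)
      _ = Real.sqrt n * r := by
          rw [Finset.sum_const, Finset.card_univ, Fintype.card_fin, nsmul_eq_mul,
            Real.sqrt_mul (by positivity), Real.sqrt_sq hr.le]
  exact lt_of_le_of_lt (measure_mono hsub) (isCompact_closedBall _ _).measure_lt_top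

/-- Let `p ∈ (1,∞)`, `P ⊂ Q` cubes in `ℝⁿ`, `P₁` the first-coordinate interval of `P`, and
suppose `F : Q × P₁ → ℝ` satisfies: (i) `y₁ ↦ F(x,y₁)` is `M`-piecewise monotone for each
`x ∈ Q`; (ii) `F` is bounded on `(Q ∖ H_δ^{P;Q}) × P₁` for each `δ ∈ (0,1/2)`; (iii)
`𝟏_{H_δ^{P;Q}}(x)·∫_{P₁}|F(x,y₁)|dy₁ → 0` in `L^p(Q)` as `δ → 0`.  Then
`∫_{P₁} F(x,y₁) s_k(y₁) dy₁ → 0` in `L^p(Q)` as `k → ∞`. -/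
theorem stmt18 (n : ℕ) [NeZero n] (pp : ℝ) (hpp : 1 < pp) (M : ℕ) (hM : 1 ≤ M)
    (p q : EuclideanSpace ℝ (Fin n)) (ℓP ℓQ : ℝ) (hℓP : 0 < ℓP) (hℓQ : 0 < ℓQ)
    (hPQ : euCube p ℓP ⊆ euCube q ℓQ)
    (F : EuclideanSpace ℝ (Fin n) → ℝ → ℝ)
    (hmono : ∀ x ∈ euCube q ℓQ, ∃ t : ℕ → ℝ,
      t 0 = p 0 ∧ t M = p 0 + ℓP ∧ (∀ i < M, t i ≤ t (i + 1)) ∧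
      ∀ i < M,
        (MonotoneOn (F x) (Ioo (t i) (t (i + 1))) ∨ AntitoneOn (F x) (Ioo (t i) (t (i + 1)))) ∧
        ((∀ y ∈ Ioo (t i) (t (i + 1)), 0 ≤ F x y) ∨ (∀ y ∈ Ioo (t i) (t (i + 1)), F x y ≤ 0)))
    (hbdd : ∀ δ ∈ Ioo (0:ℝ) (1/2), ∃ C : ℝ,
      ∀ x ∈ euCube q ℓQ \ extHalo p ℓP q ℓQ δ, ∀ y₁ ∈ Icc (p 0) (p 0 + ℓP), |F x y₁| ≤ C)
    (hhalo : Tendsto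
      (fun δ : ℝ => ∫⁻ x in euCube q ℓQ,
        (ENNReal.ofReal ((extHalo p ℓP q ℓQ δ).indicator
          (fun x => ∫ y₁ in (p 0)..(p 0 + ℓP), |F x y₁|) x)) ^ pp)
      (nhdsWithin 0 (Ioi (0:ℝ))) (nhds 0)) :
    Tendsto
      (fun k : ℕ => ∫⁻ x in euCube q ℓQ,
        (ENNReal.ofReal |∫ y₁ in (p 0)..(p 0 + ℓP), F x y₁ * sAltOn k (p 0) ℓP y₁|) ^ pp)
      atTop (nhds 0) := by
  have hQmeas := euCube_measurable q ℓQ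
  have hQvol := euCube_volume_lt_top q hℓQ
  have hpp0 : (0:ℝ) ≤ pp := by linarith
  rw [ENNReal.tendsto_atTop_zero]
  intro ε hε
  have hε2 : (0:ℝ≥0∞) < ε / 2 := ENNReal.half_pos hε.ne'
  have hev1 : ∀ᶠ δ in nhdsWithin (0:ℝ) (Ioi 0),
      (∫⁻ x in euCube q ℓQ,
        (ENNReal.ofReal ((extHalo p ℓP q ℓQ δ).indicator
          (fun x => ∫ y₁ in (p 0)..(p 0 + ℓP), |F x y₁|) x)) ^ pp) < ε / 2 :=
    hhalo.eventually (gt_mem_nhds hε2)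
  have hev2 : ∀ᶠ δ in nhdsWithin (0:ℝ) (Ioi 0), δ < 1/2 :=
    Filter.Eventually.filter_mono nhdsWithin_le_nhds (gt_mem_nhds (by norm_num : (0:ℝ) < 1/2))
  have hev3 : ∀ᶠ δ in nhdsWithin (0:ℝ) (Ioi 0), δ ∈ Ioi (0:ℝ) :=
    eventually_iff.mpr self_mem_nhdsWithin
  obtain ⟨δ, h1, h2, h3⟩ := (hev1.and (hev2.and hev3)).exists
  obtain ⟨C, hC⟩ := hbdd δ ⟨h3, h2⟩
  set C' := |C| with hC'def
  have hC' : ∀ x ∈ euCube q ℓQ \ extHalo p ℓP q ℓQ δ, ∀ y ∈ Icc (p 0) (p 0 + ℓP),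
      |F x y| ≤ C' := fun x hx y hy => (hC x hx y hy).trans (le_abs_self C)
  -- off-halo bound
  have hoff : ∀ k : ℕ, ∀ x ∈ euCube q ℓQ \ extHalo p ℓP q ℓQ δ,
      |∫ y in (p 0)..(p 0 + ℓP), F x y * sAltOn k (p 0) ℓP y| ≤
        M * (4 * C' * (ℓP / 2 ^ k)) := by
    intro k x hx
    obtain ⟨t, ht0, htM, hstep, hpm⟩ := hmono x hx.1
    have hCx := hC' x hx
    have hint : IntervalIntegrable (F x) volume (p 0) (p 0 + ℓP) :=
      integrable_of_pieces hℓP hCx ht0 htM hstep (fun i hi => (hpm i hi).1)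
    exact whole_bound k M hℓP hint hCx ht0 htM hstep (fun i hi => (hpm i hi).1)
  -- choose N
  have hBtend : Tendsto (fun k : ℕ =>
      ENNReal.ofReal (M * (4 * C' * (ℓP / 2 ^ k))) ^ pp * volume (euCube q ℓQ))
      atTop (nhds 0) := by
    have hr : Tendsto (fun k : ℕ => (M * (4 * C' * ℓP)) * (1/2 : ℝ) ^ k) atTop (nhds 0) := by
      have := tendsto_pow_atTop_nhds_zero_of_lt_one (by norm_num : (0:ℝ) ≤ 1/2)
        (by norm_num : (1/2:ℝ) < 1)
      simpa using this.const_mul (M * (4 * C' * ℓP))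
    have heq : ∀ k : ℕ, M * (4 * C' * (ℓP / 2 ^ k)) = (M * (4 * C' * ℓP)) * (1/2 : ℝ) ^ k := by
      intro k
      rw [div_pow, one_pow]
      field_simp
    have h0 : Tendsto (fun k : ℕ => ENNReal.ofReal (M * (4 * C' * (ℓP / 2 ^ k))))
        atTop (nhds 0) := by
      rw [show (0:ℝ≥0∞) = ENNReal.ofReal 0 by simp]
      refine (ENNReal.continuous_ofReal.tendsto 0).comp ?_
      simpa [heq] using hr
    have h1' : Tendsto (fun k : ℕ => ENNReal.ofReal (M * (4 * C' * (ℓP / 2 ^ k))) ^ pp)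
        atTop (nhds 0) := by
      have := (ENNReal.continuous_rpow_const (y := pp)).tendsto 0
      rw [ENNReal.zero_rpow_of_pos (by linarith : 0 < pp)] at this
      exact this.comp h0
    have := ENNReal.Tendsto.mul_const h1' (Or.inr hQvol.ne)
    simpa using this
  obtain ⟨N, hN⟩ := ENNReal.tendsto_atTop_zero.mp hBtend (ε / 2) hε2
  refine ⟨N, fun k hk => ?_⟩
  -- pointwise bound
  have hpt : ∀ x ∈ euCube q ℓQ,
      (ENNReal.ofReal |∫ y₁ in (p 0)..(p 0 + ℓP), F x y₁ * sAltOn k (p 0) ℓP y₁|) ^ pp ≤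
        (ENNReal.ofReal ((extHalo p ℓP q ℓQ δ).indicator
          (fun x => ∫ y₁ in (p 0)..(p 0 + ℓP), |F x y₁|) x)) ^ pp +
          ENNReal.ofReal (M * (4 * C' * (ℓP / 2 ^ k))) ^ pp := by
    intro x hx
    by_cases hxh : x ∈ extHalo p ℓP q ℓQ δ
    · refine le_trans ?_ le_self_add
      refine ENNReal.rpow_le_rpow ?_ hpp0
      refine ENNReal.ofReal_le_ofReal ?_
      rw [indicator_of_mem hxh]
      exact halo_bound k hℓP (F x)
    · refine le_trans ?_ le_add_self
      refine ENNReal.rpow_le_rpow ?_ hpp0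
      refine ENNReal.ofReal_le_ofReal ?_
      exact hoff k x ⟨hx, hxh⟩
  calc (∫⁻ x in euCube q ℓQ,
      (ENNReal.ofReal |∫ y₁ in (p 0)..(p 0 + ℓP), F x y₁ * sAltOn k (p 0) ℓP y₁|) ^ pp)
      ≤ ∫⁻ x in euCube q ℓQ,
        ((ENNReal.ofReal ((extHalo p ℓP q ℓQ δ).indicator
          (fun x => ∫ y₁ in (p 0)..(p 0 + ℓP), |F x y₁|) x)) ^ pp +
          ENNReal.ofReal (M * (4 * C' * (ℓP / 2 ^ k))) ^ pp) :=
        lintegral_mono_ae ((ae_restrict_iff' hQmeas).mpr (ae_of_all _ hpt))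
    _ = (∫⁻ x in euCube q ℓQ,
        (ENNReal.ofReal ((extHalo p ℓP q ℓQ δ).indicator
          (fun x => ∫ y₁ in (p 0)..(p 0 + ℓP), |F x y₁|) x)) ^ pp) +
          ENNReal.ofReal (M * (4 * C' * (ℓP / 2 ^ k))) ^ pp * volume (euCube q ℓQ) := by
        rw [lintegral_add_right _ measurable_const, setLIntegral_const]
    _ ≤ ε / 2 + ε / 2 := add_le_add h1.le (hN k hk)
    _ = ε := ENNReal.add_halves ε
end
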